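/- Let Λ be a commutative ring, let E be a free Λ-module of finite rank, and let q : E → Λ be a quadratic form. Then the canonical Λ-linear map ι : E → C(E,q) into the Clifford algebra C(E,q) is injective, and its image ι(E) is a direct summand of C(E,q) as a Λ-module, i.e., there exists a Λ-submodule W of C(E,q) with C(E,q) = ι(E) ⊕ W. -/
import Mathlib


/-- Let `Λ` be a commutative ring, `E` a free `Λ`-module of finite rank and
`q : E → Λ` a quadratic form. Then the canonical map `ι : E → C(E,q)` into the
Clifford algebra is injective and its image is a direct summand of `C(E,q)` as a
`Λ`-module. -/
theorem cliffordAlgebra_iota_injective_and_image_direct_summand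
    (Λ : Type*) [CommRing Λ] (E : Type*) [AddCommGroup E] [Module Λ E]
    [Module.Free Λ E] [Module.Finite Λ E] (q : QuadraticForm Λ E) :
    Function.Injective (CliffordAlgebra.ι q) ∧
      ∃ W : Submodule Λ (CliffordAlgebra q),
        IsCompl (LinearMap.range (CliffordAlgebra.ι q)) W := by
  obtain ⟨B, hB⟩ := LinearMap.BilinMap.toQuadraticMap_surjective (R := Λ) (M := E) (N := Λ) q
  have h : B.toQuadraticMap = q - 0 := by rw [hB, sub_zero]
  -- linear equivalence from the exterior algebra (Clifford algebra of 0) to `C(E,q)`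
  let e : CliffordAlgebra (0 : QuadraticForm Λ E) ≃ₗ[Λ] CliffordAlgebra q :=
    CliffordAlgebra.changeFormEquiv h
  -- retraction of `ι q`
  let r : CliffordAlgebra q →ₗ[Λ] E :=
    ExteriorAlgebra.ιInv ∘ₗ (e.symm : CliffordAlgebra q →ₗ[Λ] CliffordAlgebra (0 : QuadraticForm Λ E))
  have hr : ∀ m : E, r (CliffordAlgebra.ι q m) = m := by
    intro m
    have h1 : e.symm (CliffordAlgebra.ι q m) = CliffordAlgebra.ι (0 : QuadraticForm Λ E) m := by
      simp only [e, CliffordAlgebra.changeFormEquiv_symm]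
      exact CliffordAlgebra.changeForm_ι (CliffordAlgebra.changeForm.neg_proof h) m
    have h2 : ExteriorAlgebra.ιInv (CliffordAlgebra.ι (0 : QuadraticForm Λ E) m) = m :=
      ExteriorAlgebra.ι_leftInverse m
    show ExteriorAlgebra.ιInv (e.symm (CliffordAlgebra.ι q m)) = m
    rw [h1]; exact h2
  constructor
  · intro a b hab
    have := congrArg r hab
    rwa [hr, hr] at this
  · set p := LinearMap.range (CliffordAlgebra.ι q) with hp
    let f : CliffordAlgebra q →ₗ[Λ] p :=
      LinearMap.codRestrict p ((CliffordAlgebra.ι q) ∘ₗ r) fun x => LinearMap.mem_range_self _ _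
    have hf : ∀ x : p, f x = x := by
      rintro ⟨x, m, rfl⟩
      ext
      simp only [f, LinearMap.codRestrict_apply, LinearMap.comp_apply, hr]
    exact ⟨LinearMap.ker f, LinearMap.isCompl_of_proj hf⟩
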